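/- For all x > 0 and y > 0, the inner products ⟨u₁, ∇F(x,y)⟩ and ⟨u₂, ∇F(x,y)⟩ are strictly positive; consequently there exist real numbers a₁ > 0 and a₂ > 0 such that ∇F(x,y) = a₁u₁ + a₂u₂. -/

import Mathlib

open scoped RealInnerProductSpace

set_option maxHeartbeats 1000000 in
/-- **Claim 1.** For `F(x,y) = ((x²-y²-1)² + 4x²y²)/2` (i.e. `F = |f|²/2` for
`f(z) = z²-1`), with `∇F(x,y) = (2(x²+y²-1)x, 2(x²+y²+1)y)`,
`S = √((1-x²+y²)² + 4x²y²)`, `u₁ = (x²-y²-1-S, 2xy)` and `u₂ = (x²-y²-1+S, 2xy)`: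
if `x > 0` and `y > 0`, then `⟨u₁, ∇F⟩ > 0` and `⟨u₂, ∇F⟩ > 0`, and consequently
`∇F = a₁ u₁ + a₂ u₂` for some `a₁, a₂ > 0`. -/
theorem gradient_positive_combination_of_eigenvectors
    (x y : ℝ) (hx : 0 < x) (hy : 0 < y)
    (S : ℝ) (hS : S = Real.sqrt ((1 - x ^ 2 + y ^ 2) ^ 2 + 4 * x ^ 2 * y ^ 2))
    (gF u₁ u₂ : EuclideanSpace ℝ (Fin 2))
    (hgF : gF = WithLp.toLp 2 ![2 * (x ^ 2 + y ^ 2 - 1) * x, 2 * (x ^ 2 + y ^ 2 + 1) * y])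
    (hu₁ : u₁ = WithLp.toLp 2 ![x ^ 2 - y ^ 2 - 1 - S, 2 * x * y])
    (hu₂ : u₂ = WithLp.toLp 2 ![x ^ 2 - y ^ 2 - 1 + S, 2 * x * y]) :
    0 < ⟪u₁, gF⟫ ∧ 0 < ⟪u₂, gF⟫ ∧
      ∃ a₁ a₂ : ℝ, 0 < a₁ ∧ 0 < a₂ ∧ gF = a₁ • u₁ + a₂ • u₂ := by
  have hS0 : 0 ≤ S := hS ▸ Real.sqrt_nonneg _
  have hS2 : S ^ 2 = (x ^ 2 - y ^ 2 - 1) ^ 2 + 4 * x ^ 2 * y ^ 2 := by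
    rw [hS, sq, Real.mul_self_sqrt (by positivity)]; ring
  have hxy : 0 < x * y := mul_pos hx hy
  have hSpos : 0 < S := by nlinarith
  have hSA1 : 0 < S - (x ^ 2 - y ^ 2 - 1) := by
    nlinarith [sq_nonneg (S - (x ^ 2 - y ^ 2 - 1)), sq_nonneg (S + (x ^ 2 - y ^ 2 - 1))]
  have hSA2 : 0 < S + (x ^ 2 - y ^ 2 - 1) := by
    nlinarith [sq_nonneg (S - (x ^ 2 - y ^ 2 - 1)), sq_nonneg (S + (x ^ 2 - y ^ 2 - 1))]
  have hQ : 0 < 2 * (x ^ 2 + y ^ 2 + 1) * y := by positivity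
  -- D := 2xy·P − Q·A
  have hid : (2 * (x ^ 2 + y ^ 2 + 1) * y * S) ^ 2
      = (2 * x * y * (2 * (x ^ 2 + y ^ 2 - 1) * x)
          - 2 * (x ^ 2 + y ^ 2 + 1) * y * (x ^ 2 - y ^ 2 - 1)) ^ 2
        + 16 * x ^ 2 * y ^ 2 * S ^ 2 := by
    linear_combination ((2 * (x ^ 2 + y ^ 2 + 1) * y) ^ 2 - 16 * x ^ 2 * y ^ 2) * hS2
  have hQS : 0 < 2 * (x ^ 2 + y ^ 2 + 1) * y * S := mul_pos hQ hSpos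
  have hxyS : 0 < 16 * x ^ 2 * y ^ 2 * S ^ 2 := by positivity
  have hQSD : 2 * x * y * (2 * (x ^ 2 + y ^ 2 - 1) * x)
      - 2 * (x ^ 2 + y ^ 2 + 1) * y * (x ^ 2 - y ^ 2 - 1)
      < 2 * (x ^ 2 + y ^ 2 + 1) * y * S := by
    nlinarith [hid, hQS, hxyS]
  have hQSD2 : -(2 * (x ^ 2 + y ^ 2 + 1) * y * S)
      < 2 * x * y * (2 * (x ^ 2 + y ^ 2 - 1) * x)
      - 2 * (x ^ 2 + y ^ 2 + 1) * y * (x ^ 2 - y ^ 2 - 1) := by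
    nlinarith [hid, hQS, hxyS]
  have h1 : 0 < (x ^ 2 - y ^ 2 - 1 - S) * (2 * (x ^ 2 + y ^ 2 - 1) * x)
      + 2 * x * y * (2 * (x ^ 2 + y ^ 2 + 1) * y) := by
    have key1 : (S + (x ^ 2 - y ^ 2 - 1)) *
        ((x ^ 2 - y ^ 2 - 1 - S) * (2 * (x ^ 2 + y ^ 2 - 1) * x)
          + 2 * x * y * (2 * (x ^ 2 + y ^ 2 + 1) * y))
        = 2 * x * y * (2 * (x ^ 2 + y ^ 2 + 1) * y * S
            - (2 * x * y * (2 * (x ^ 2 + y ^ 2 - 1) * x)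
              - 2 * (x ^ 2 + y ^ 2 + 1) * y * (x ^ 2 - y ^ 2 - 1))) := by
      linear_combination (-(2 * (x ^ 2 + y ^ 2 - 1) * x)) * hS2
    nlinarith [key1, mul_pos hxy (by linarith : (0:ℝ) <
      2 * (x ^ 2 + y ^ 2 + 1) * y * S - (2 * x * y * (2 * (x ^ 2 + y ^ 2 - 1) * x)
        - 2 * (x ^ 2 + y ^ 2 + 1) * y * (x ^ 2 - y ^ 2 - 1))), hSA2]
  have h2 : 0 < (x ^ 2 - y ^ 2 - 1 + S) * (2 * (x ^ 2 + y ^ 2 - 1) * x)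
      + 2 * x * y * (2 * (x ^ 2 + y ^ 2 + 1) * y) := by
    have key2 : (S - (x ^ 2 - y ^ 2 - 1)) *
        ((x ^ 2 - y ^ 2 - 1 + S) * (2 * (x ^ 2 + y ^ 2 - 1) * x)
          + 2 * x * y * (2 * (x ^ 2 + y ^ 2 + 1) * y))
        = 2 * x * y * (2 * (x ^ 2 + y ^ 2 + 1) * y * S
            + (2 * x * y * (2 * (x ^ 2 + y ^ 2 - 1) * x)
              - 2 * (x ^ 2 + y ^ 2 + 1) * y * (x ^ 2 - y ^ 2 - 1))) := by
      linear_combination (2 * (x ^ 2 + y ^ 2 - 1) * x) * hS2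
    nlinarith [key2, mul_pos hxy (by linarith : (0:ℝ) <
      2 * (x ^ 2 + y ^ 2 + 1) * y * S + (2 * x * y * (2 * (x ^ 2 + y ^ 2 - 1) * x)
        - 2 * (x ^ 2 + y ^ 2 + 1) * y * (x ^ 2 - y ^ 2 - 1))), hSA1]
  have hinner1 : ⟪u₁, gF⟫ = (x ^ 2 - y ^ 2 - 1 - S) * (2 * (x ^ 2 + y ^ 2 - 1) * x)
      + 2 * x * y * (2 * (x ^ 2 + y ^ 2 + 1) * y) := by
    subst hgF hu₁
    simp [PiLp.inner_apply, Fin.sum_univ_two]; ring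
  have hinner2 : ⟪u₂, gF⟫ = (x ^ 2 - y ^ 2 - 1 + S) * (2 * (x ^ 2 + y ^ 2 - 1) * x)
      + 2 * x * y * (2 * (x ^ 2 + y ^ 2 + 1) * y) := by
    subst hgF hu₂
    simp [PiLp.inner_apply, Fin.sum_univ_two]; ring
  refine ⟨hinner1 ▸ h1, hinner2 ▸ h2,
    ((x ^ 2 - y ^ 2 - 1 - S) * (2 * (x ^ 2 + y ^ 2 - 1) * x)
      + 2 * x * y * (2 * (x ^ 2 + y ^ 2 + 1) * y)) /
      (2 * S * (S - (x ^ 2 - y ^ 2 - 1))),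
    ((x ^ 2 - y ^ 2 - 1 + S) * (2 * (x ^ 2 + y ^ 2 - 1) * x)
      + 2 * x * y * (2 * (x ^ 2 + y ^ 2 + 1) * y)) /
      (2 * S * (S + (x ^ 2 - y ^ 2 - 1))), ?_, ?_, ?_⟩
  · exact div_pos h1 (by positivity)
  · exact div_pos h2 (by positivity)
  · subst hgF hu₁ hu₂
    have hSne : S ≠ 0 := ne_of_gt hSpos
    have h1ne : S - (x ^ 2 - y ^ 2 - 1) ≠ 0 := ne_of_gt hSA1
    have h2ne : S + (x ^ 2 - y ^ 2 - 1) ≠ 0 := ne_of_gt hSA2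
    ext i
    fin_cases i
    · simp [PiLp.add_apply, PiLp.smul_apply, smul_eq_mul]
      field_simp
      ring
    · simp [PiLp.add_apply, PiLp.smul_apply, smul_eq_mul]
      field_simp
      linear_combination ((x ^ 2 + y ^ 2 + 1) * S) * hS2
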